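/- (Corollary: capacity-power bound on doubling constant) For any range space (X, R) of VC-dimension d there is an absolute constant c > 0 such that D_ε ≤ (c·τ(ε))^d for all ε ∈ (0,1], where τ is Alexander's capacity and D_ε the doubling constant. -/

import Mathlib

set_option linter.unusedSectionVars false

open Finset
open scoped Classical

noncomputable section

def meas {X : Type*} (P : X → ℝ) (S : Finset X) : ℝ := ∑ x ∈ S, P x

def alexCap {X : Type*} (P : X → ℝ) (R : Finset (Finset X)) (ε : ℝ) : ℝ :=
  sSup {t : ℝ | ∃ ε₀ : ℝ, ε ≤ ε₀ ∧
    t = meas P ((R.filter fun S => meas P S ≤ ε₀).biUnion id) / ε₀}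

namespace HPack

lemma min4 (a b c d : ℕ) :
    min a c + min b d ≤ min (max a b) (max c d) + min (min a b) (min c d) := by omega

theorem degree_lemma {α : Type*} [DecidableEq α] :
    ∀ (n : ℕ) (A : Finset α), A.card = n → ∀ (d : ℕ) (ν : Finset α → ℕ),
    (∀ S, ν S ≠ 0 → S ⊆ A) →
    (∀ Y : Finset α, (∀ Z ⊆ Y, ∃ S, ν S ≠ 0 ∧ S ∩ Y = Z) → Y.card ≤ d) →
    ∑ a ∈ A, ∑ u ∈ (A.erase a).powerset, min (ν u) (ν (insert a u))
      ≤ d * ∑ u ∈ A.powerset, ν u := by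
  intro n
  induction n with
  | zero =>
    intro A hA d ν _ _
    rw [Finset.card_eq_zero] at hA
    subst hA; simp
  | succ n ih =>
    intro A hA d ν hsupp hshat
    have hne : A.Nonempty := by rw [← Finset.card_pos, hA]; omega
    obtain ⟨y, hy⟩ := hne
    set A' := A.erase y with hA'
    have hyA' : y ∉ A' := Finset.notMem_erase _ _
    have hins : insert y A' = A := Finset.insert_erase hy
    have hcard' : A'.card = n := by
      rw [hA', Finset.card_erase_of_mem hy, hA]; omega
    set ν' : Finset α → ℕ := fun u => if u ⊆ A' then max (ν u) (ν (insert y u)) else 0 with hν'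
    set ν'' : Finset α → ℕ := fun u => if u ⊆ A' then min (ν u) (ν (insert y u)) else 0 with hν''
    -- supports
    have hsupp' : ∀ S, ν' S ≠ 0 → S ⊆ A' := by
      intro S hS; by_contra h; simp only [hν', if_neg h] at hS; exact hS rfl
    have hsupp'' : ∀ S, ν'' S ≠ 0 → S ⊆ A' := by
      intro S hS; by_contra h; simp only [hν'', if_neg h] at hS; exact hS rfl
    -- shattering for ν'
    have hshat' : ∀ Y : Finset α, (∀ Z ⊆ Y, ∃ S, ν' S ≠ 0 ∧ S ∩ Y = Z) → Y.card ≤ d := by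
      intro Y hY
      by_cases hyY : y ∈ Y
      · obtain ⟨S, hS0, hSY⟩ := hY Y Finset.Subset.rfl
        have hSA' : S ⊆ A' := hsupp' S hS0
        have : Y ⊆ S := by rw [← hSY]; exact Finset.inter_subset_left
        exact absurd (hSA' (this hyY)) hyA'
      · apply hshat
        intro Z hZ
        obtain ⟨S, hS0, hSY⟩ := hY Z hZ
        have hSA' : S ⊆ A' := hsupp' S hS0
        simp only [hν', if_pos hSA'] at hS0
        rcases Nat.eq_zero_or_pos (ν S) with h0 | hpos
        · refine ⟨insert y S, ?_, ?_⟩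
          · simp only [h0] at hS0; omega
          · rw [Finset.insert_inter_of_notMem hyY, hSY]
        · exact ⟨S, by omega, hSY⟩
    -- shattering for ν'' at level d-1 (when relevant)
    have hshat'' : ∀ Y : Finset α, (∀ Z ⊆ Y, ∃ S, ν'' S ≠ 0 ∧ S ∩ Y = Z) → Y.card + 1 ≤ d := by
      intro Y hY
      by_cases hyY : y ∈ Y
      · obtain ⟨S, hS0, hSY⟩ := hY Y Finset.Subset.rfl
        have hSA' : S ⊆ A' := hsupp'' S hS0
        have : Y ⊆ S := by rw [← hSY]; exact Finset.inter_subset_left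
        exact absurd (hSA' (this hyY)) hyA'
      · have hcard : (insert y Y).card ≤ d := by
          apply hshat
          intro Z hZ
          have hZ' : Z.erase y ⊆ Y := by
            intro z hz
            have hzy := Finset.ne_of_mem_erase hz
            have := hZ (Finset.mem_of_mem_erase hz)
            rcases Finset.mem_insert.1 this with h | h
            · exact absurd h hzy
            · exact h
          obtain ⟨u, hu0, huY⟩ := hY (Z.erase y) hZ'
          have huA' : u ⊆ A' := hsupp'' u hu0
          have hyu : y ∉ u := fun h => hyA' (huA' h)
          simp only [hν'', if_pos huA'] at hu0
          by_cases hyZ : y ∈ Z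
          · refine ⟨insert y u, by omega, ?_⟩
            have : insert y u ∩ insert y Y = insert y (u ∩ Y) := by
              ext z
              simp only [Finset.mem_inter, Finset.mem_insert]
              tauto
            rw [this, huY, Finset.insert_erase hyZ]
          · refine ⟨u, by omega, ?_⟩
            have : u ∩ insert y Y = u ∩ Y := by
              ext z
              simp only [Finset.mem_inter, Finset.mem_insert]
              constructor
              · rintro ⟨hzu, h | h⟩
                · exact absurd (h ▸ hzu) hyu
                · exact ⟨hzu, h⟩
              · rintro ⟨hzu, h⟩; exact ⟨hzu, Or.inr h⟩
            rw [this, huY, Finset.erase_eq_of_notMem hyZ]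
        rw [Finset.card_insert_of_notMem hyY] at hcard
        omega
    -- weight additivity
    have hwadd : ∑ u ∈ A.powerset, ν u
        = ∑ u ∈ A'.powerset, ν' u + ∑ u ∈ A'.powerset, ν'' u := by
      have h1 : ∑ u ∈ A'.powerset, ν' u + ∑ u ∈ A'.powerset, ν'' u
          = ∑ u ∈ A'.powerset, (ν u + ν (insert y u)) := by
        rw [← Finset.sum_add_distrib]
        apply Finset.sum_congr rfl
        intro u hu
        rw [Finset.mem_powerset] at hu
        simp only [hν', hν'', if_pos hu]
        omega
      rw [h1, Finset.sum_add_distrib]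
      have h2 : ∑ u ∈ A'.powerset, ν (insert y u)
          = ∑ u ∈ A'.powerset.image (insert y), ν u := by
        rw [Finset.sum_image]
        intro u hu v hv huv
        rw [Finset.mem_coe, Finset.mem_powerset] at hu hv
        have hyu : y ∉ u := fun h => hyA' (hu h)
        have hyv : y ∉ v := fun h => hyA' (hv h)
        rw [← Finset.erase_insert hyu, huv, Finset.erase_insert hyv]
      rw [h2, ← Finset.sum_union, ← Finset.powerset_insert, hins]
      rw [Finset.disjoint_left]
      intro u hu hu'
      rw [Finset.mem_powerset] at hu
      obtain ⟨v, hv, rfl⟩ := Finset.mem_image.1 hu'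
      exact hyA' (hu (Finset.mem_insert_self _ _))
    -- split the edge sum
    have hsplit : ∑ a ∈ A, ∑ u ∈ (A.erase a).powerset, min (ν u) (ν (insert a u))
        ≤ (∑ u ∈ A'.powerset, ν'' u)
          + ((∑ a ∈ A', ∑ u ∈ (A'.erase a).powerset, min (ν' u) (ν' (insert a u)))
           + (∑ a ∈ A', ∑ u ∈ (A'.erase a).powerset, min (ν'' u) (ν'' (insert a u)))) := by
      rw [← hins, Finset.sum_insert hyA']
      gcongr ?_ + ?_
      · -- the a = y term
        rw [Finset.erase_insert hyA']
        apply le_of_eq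
        apply Finset.sum_congr rfl
        intro u hu
        rw [Finset.mem_powerset] at hu
        simp only [hν'', if_pos hu]
      · -- terms a ∈ A'
        rw [← Finset.sum_add_distrib]
        apply Finset.sum_le_sum
        intro a ha
        have hay : a ≠ y := fun h => hyA' (h ▸ ha)
        have herase : (insert y A').erase a = insert y (A'.erase a) := by
          ext z
          simp only [Finset.mem_erase, Finset.mem_insert]
          constructor
          · rintro ⟨hz, h | h⟩
            · exact Or.inl h
            · exact Or.inr ⟨hz, h⟩
          · rintro (h | ⟨hz, h⟩)
            · exact ⟨h ▸ (Ne.symm hay), Or.inl h⟩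
            · exact ⟨hz, Or.inr h⟩
        rw [herase, Finset.powerset_insert, Finset.sum_union]
        · have himg : ∑ u ∈ (A'.erase a).powerset.image (insert y), min (ν u) (ν (insert a u))
              = ∑ u ∈ (A'.erase a).powerset, min (ν (insert y u)) (ν (insert a (insert y u))) := by
            rw [Finset.sum_image]
            intro u hu v hv huv
            rw [Finset.mem_coe, Finset.mem_powerset] at hu hv
            have hyu : y ∉ u := fun h => hyA' (Finset.erase_subset _ _ (hu h))
            have hyv : y ∉ v := fun h => hyA' (Finset.erase_subset _ _ (hv h))
            rw [← Finset.erase_insert hyu, huv, Finset.erase_insert hyv]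
          rw [himg, ← Finset.sum_add_distrib, ← Finset.sum_add_distrib]
          apply Finset.sum_le_sum
          intro u hu
          rw [Finset.mem_powerset] at hu
          have huA' : u ⊆ A' := hu.trans (Finset.erase_subset _ _)
          have hau : insert a u ⊆ A' := Finset.insert_subset ha huA'
          have hcomm : insert a (insert y u) = insert y (insert a u) := Finset.insert_comm _ _ _
          rw [hcomm]
          simp only [hν', hν'', if_pos huA', if_pos hau]
          exact min4 _ _ _ _
        · rw [Finset.disjoint_left]
          intro u hu hu'
          rw [Finset.mem_powerset] at hu
          obtain ⟨v, hv, rfl⟩ := Finset.mem_image.1 hu'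
          exact hyA' (Finset.erase_subset _ _ (hu (Finset.mem_insert_self _ _)))
    -- conclude
    by_cases hd : ∃ u, ν'' u ≠ 0
    · obtain ⟨u₀, hu₀⟩ := hd
      have hd1 : 1 ≤ d := by
        have huA' : u₀ ⊆ A' := hsupp'' u₀ hu₀
        have hyu : y ∉ u₀ := fun h => hyA' (huA' h)
        simp only [hν'', if_pos huA'] at hu₀
        have : ({y} : Finset α).card ≤ d := by
          apply hshat
          intro Z hZ
          rcases Finset.subset_singleton_iff.1 hZ with rfl | rfl
          · refine ⟨u₀, by omega, ?_⟩
            rw [Finset.inter_singleton_of_notMem hyu]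
          · refine ⟨insert y u₀, by omega, ?_⟩
            rw [Finset.inter_singleton_of_mem (Finset.mem_insert_self _ _)]
        simpa using this
      have h1 := ih A' hcard' d ν' hsupp' hshat'
      have h2 := ih A' hcard' (d - 1) ν'' hsupp'' (fun Y hY => by have := hshat'' Y hY; omega)
      rw [hwadd]
      calc _ ≤ _ := hsplit
        _ ≤ (∑ u ∈ A'.powerset, ν'' u) + (d * ∑ u ∈ A'.powerset, ν' u
              + (d - 1) * ∑ u ∈ A'.powerset, ν'' u) := by gcongr
        _ ≤ _ := by
            obtain ⟨e, rfl⟩ : ∃ e, d = e + 1 := ⟨d - 1, by omega⟩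
            simp only [Nat.add_sub_cancel]
            apply le_of_eq
            ring
    · push_neg at hd
      have hz : ∀ s : Finset (Finset α), ∑ u ∈ s, ν'' u = 0 :=
        fun s => Finset.sum_eq_zero fun u _ => hd u
      have h1 := ih A' hcard' d ν' hsupp' hshat'
      have h2 : ∑ a ∈ A', ∑ u ∈ (A'.erase a).powerset, min (ν'' u) (ν'' (insert a u)) = 0 := by
        apply Finset.sum_eq_zero
        intro a _
        apply Finset.sum_eq_zero
        intro u _
        simp [hd u]
      rw [hwadd, hz, add_zero]
      calc _ ≤ _ := hsplit
        _ = (∑ a ∈ A', ∑ u ∈ (A'.erase a).powerset, min (ν' u) (ν' (insert a u))) := by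
            rw [hz, h2]; omega
        _ ≤ d * ∑ u ∈ A'.powerset, ν' u := h1


variable {X : Type*} [Fintype X]

def tr {n : ℕ} (ω : Fin n → X) (S : Finset X) : Finset (Fin n) :=
  Finset.univ.filter fun j => ω j ∈ S

def trm {n : ℕ} (i : Fin n) (ω : Fin n → X) (S : Finset X) : Finset (Fin n) :=
  (Finset.univ.erase i).filter fun j => ω j ∈ S

def nu {n : ℕ} (V : Finset (Finset X)) (ω : Fin n → X) (u : Finset (Fin n)) : ℕ :=
  (V.filter fun S => tr ω S = u).card

def wgt {n : ℕ} (V : Finset (Finset X)) (i : Fin n) (ω : Fin n → X) : ℕ :=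
  ∑ u ∈ ((Finset.univ : Finset (Fin n)).erase i).powerset,
    min (nu V ω u) (nu V ω (insert i u))

def fc {n : ℕ} (V : Finset (Finset X)) (ω : Fin n → X) : ℕ := (V.image (tr ω)).card

def fm {n : ℕ} (V : Finset (Finset X)) (i : Fin n) (ω : Fin n → X) : ℕ :=
  (V.image (trm i ω)).card

lemma trm_eq_erase_tr {n : ℕ} (i : Fin n) (ω : Fin n → X) (S : Finset X) :
    trm i ω S = (tr ω S).erase i := by
  ext j
  simp only [trm, tr, Finset.mem_filter, Finset.mem_erase, Finset.mem_univ, true_and, and_true]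

lemma trm_update {n : ℕ} (i : Fin n) (ω : Fin n → X) (x : X) (S : Finset X) :
    trm i (Function.update ω i x) S = trm i ω S := by
  ext j
  simp only [trm, Finset.mem_filter, Finset.mem_erase, Finset.mem_univ, true_and, and_true]
  constructor <;> rintro ⟨hj, h⟩ <;> refine ⟨hj, ?_⟩ <;>
    simpa [Function.update_of_ne hj] using h

lemma trace_shatter {n d : ℕ} (V : Finset (Finset X))
    (hVC : ∀ Y : Finset X, (∀ Z ⊆ Y, ∃ S ∈ V, S ∩ Y = Z) → Y.card ≤ d)
    (ω : Fin n → X) (Y : Finset (Fin n))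
    (hY : ∀ Z ⊆ Y, ∃ S ∈ V, (tr ω S) ∩ Y = Z) : Y.card ≤ d := by
  have hinj : ∀ i ∈ Y, ∀ j ∈ Y, ω i = ω j → i = j := by
    intro i hi j hj hij
    by_contra hne
    obtain ⟨S, _, hS⟩ := hY {i} (Finset.singleton_subset_iff.2 hi)
    have hiS : i ∈ tr ω S := by
      have : i ∈ tr ω S ∩ Y := hS ▸ Finset.mem_singleton_self i
      exact Finset.mem_of_mem_inter_left this
    have hjS : j ∈ tr ω S := by
      simp only [tr, Finset.mem_filter, Finset.mem_univ, true_and] at hiS ⊢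
      rwa [← hij]
    have : j ∈ tr ω S ∩ Y := Finset.mem_inter.2 ⟨hjS, hj⟩
    rw [hS, Finset.mem_singleton] at this
    exact hne (this.symm)
  have hcard : Y.card = (Y.image ω).card := (Finset.card_image_of_injOn hinj).symm
  rw [hcard]
  apply hVC
  intro ZX hZX
  obtain ⟨S, hSV, hS⟩ := hY (Y.filter fun i => ω i ∈ ZX) (Finset.filter_subset _ _)
  refine ⟨S, hSV, ?_⟩
  ext x
  simp only [Finset.mem_inter, Finset.mem_image]
  constructor
  · rintro ⟨hxS, i, hiY, rfl⟩
    have : i ∈ tr ω S ∩ Y := by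
      simp only [tr, Finset.mem_inter, Finset.mem_filter, Finset.mem_univ, true_and]
      exact ⟨hxS, hiY⟩
    rw [hS] at this
    exact (Finset.mem_filter.1 this).2
  · intro hx
    obtain ⟨i, hiY, rfl⟩ := Finset.mem_image.1 (hZX hx)
    have : i ∈ Y.filter fun i => ω i ∈ ZX := Finset.mem_filter.2 ⟨hiY, hx⟩
    rw [← hS] at this
    have hiS := Finset.mem_of_mem_inter_left this
    simp only [tr, Finset.mem_filter] at hiS
    exact ⟨hiS.2, i, hiY, rfl⟩

lemma nu_total {n : ℕ} (V : Finset (Finset X)) (ω : Fin n → X) :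
    ∑ u ∈ (Finset.univ : Finset (Fin n)).powerset, nu V ω u = V.card :=
  (Finset.card_eq_sum_card_fiberwise fun S _ =>
    Finset.mem_powerset.2 (Finset.subset_univ _)).symm

lemma sum_wgt_le {n d : ℕ} (V : Finset (Finset X))
    (hVC : ∀ Y : Finset X, (∀ Z ⊆ Y, ∃ S ∈ V, S ∩ Y = Z) → Y.card ≤ d)
    (ω : Fin n → X) : ∑ i : Fin n, wgt V i ω ≤ d * V.card := by
  have h := degree_lemma ((Finset.univ : Finset (Fin n)).card) Finset.univ rfl d (nu V ω)
    (fun S _ => Finset.subset_univ S) ?_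
  · rw [nu_total] at h
    simpa [wgt] using h
  · intro Y hY
    apply trace_shatter V hVC ω
    intro Z hZ
    obtain ⟨u, hu0, huY⟩ := hY Z hZ
    have : ∃ S ∈ V, tr ω S = u := by
      have hne : (V.filter fun S => tr ω S = u).Nonempty :=
        Finset.card_pos.1 (Nat.pos_of_ne_zero hu0)
      obtain ⟨S, hS⟩ := hne
      rw [Finset.mem_filter] at hS
      exact ⟨S, hS.1, hS.2⟩
    obtain ⟨S, hSV, rfl⟩ := this
    exact ⟨S, hSV, huY⟩

lemma sauer {n d : ℕ} (V : Finset (Finset X))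
    (hVC : ∀ Y : Finset X, (∀ Z ⊆ Y, ∃ S ∈ V, S ∩ Y = Z) → Y.card ≤ d)
    (ω : Fin n → X) : fc V ω ≤ ∑ k ∈ Finset.range (d + 1), n.choose k := by
  have h1 : fc V ω ≤ ((V.image (tr ω)).shatterer).card := Finset.card_le_card_shatterer _
  have h2 : (V.image (tr ω)).shatterer
      ⊆ (Finset.range (d + 1)).biUnion
        (fun k => Finset.powersetCard k (Finset.univ : Finset (Fin n))) := by
    intro s hs
    rw [Finset.mem_shatterer] at hs
    have hscard : s.card ≤ d := by
      apply trace_shatter V hVC ω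
      intro Z hZ
      obtain ⟨u, hu, hus⟩ := hs hZ
      obtain ⟨S, hSV, rfl⟩ := Finset.mem_image.1 hu
      exact ⟨S, hSV, by rwa [Finset.inter_comm]⟩
    rw [Finset.mem_biUnion]
    exact ⟨s.card, Finset.mem_range.2 (by omega),
      (Finset.mem_powersetCard_univ).2 rfl⟩
  calc fc V ω ≤ _ := h1
    _ ≤ ((Finset.range (d + 1)).biUnion
        (fun k => Finset.powersetCard k (Finset.univ : Finset (Fin n)))).card :=
      Finset.card_le_card h2
    _ ≤ ∑ k ∈ Finset.range (d + 1), (Finset.powersetCard k (Finset.univ : Finset (Fin n))).card :=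
      Finset.card_biUnion_le
    _ = ∑ k ∈ Finset.range (d + 1), n.choose k := by
      apply Finset.sum_congr rfl
      intro k _
      rw [Finset.card_powersetCard, Finset.card_univ, Fintype.card_fin]

lemma fm_le_fc {n : ℕ} (V : Finset (Finset X)) (i : Fin n) (ω : Fin n → X) :
    fm V i ω ≤ fc V ω := by
  have : V.image (trm i ω) = (V.image (tr ω)).image (fun u => u.erase i) := by
    rw [Finset.image_image]
    apply Finset.image_congr
    intro S _
    exact trm_eq_erase_tr i ω S
  rw [fm, this]
  exact (Finset.card_image_le).trans_eq rfl

lemma nu_update_base {n : ℕ} (V : Finset (Finset X)) (i : Fin n) (ω : Fin n → X) (x : X)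
    (v : Finset (Fin n)) (hiv : i ∉ v) :
    nu V (Function.update ω i x) v
      = ((V.filter fun S => trm i ω S = v).filter fun S => x ∉ S).card := by
  rw [nu, Finset.filter_filter]
  congr 1
  apply Finset.filter_congr
  intro S _
  constructor
  · intro h
    have hxS : x ∉ S := by
      intro hx
      have : i ∈ tr (Function.update ω i x) S := by
        simp [tr, Function.update_self, hx]
      rw [h] at this; exact hiv this
    refine ⟨?_, hxS⟩
    rw [← trm_update i ω x S, trm_eq_erase_tr, h, Finset.erase_eq_of_notMem hiv]
  · rintro ⟨h1, h2⟩
    ext j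
    simp only [tr, Finset.mem_filter, Finset.mem_univ, true_and]
    by_cases hji : j = i
    · subst hji
      simp only [Function.update_self]
      constructor
      · intro h; exact absurd h h2
      · intro h; exact absurd h hiv
    · rw [Function.update_of_ne hji, ← h1]
      simp [trm, hji]

lemma nu_update_insert {n : ℕ} (V : Finset (Finset X)) (i : Fin n) (ω : Fin n → X) (x : X)
    (v : Finset (Fin n)) (hiv : i ∉ v) :
    nu V (Function.update ω i x) (insert i v)
      = ((V.filter fun S => trm i ω S = v).filter fun S => x ∈ S).card := by
  rw [nu, Finset.filter_filter]
  congr 1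
  apply Finset.filter_congr
  intro S _
  constructor
  · intro h
    have hxS : x ∈ S := by
      have : i ∈ tr (Function.update ω i x) S := h ▸ Finset.mem_insert_self i v
      simpa [tr, Function.update_self] using this
    refine ⟨?_, hxS⟩
    rw [← trm_update i ω x S, trm_eq_erase_tr, h, Finset.erase_insert hiv]
  · rintro ⟨h1, h2⟩
    ext j
    simp only [tr, Finset.mem_filter, Finset.mem_univ, true_and]
    by_cases hji : j = i
    · subst hji
      simp [Function.update_self, h2]
    · rw [Function.update_of_ne hji, Finset.mem_insert, ← h1]
      simp [trm, hji]

lemma class_bound (P : X → ℝ) (hP0 : ∀ x, 0 ≤ P x) {n : ℕ} (V : Finset (Finset X)) (δ : ℝ)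
    (hδ0 : 0 ≤ δ)
    (hsep : ∀ S₁ ∈ V, ∀ S₂ ∈ V, S₁ ≠ S₂ → δ ≤ meas P (symmDiff S₁ S₂))
    (i : Fin n) (ω : Fin n → X) (v : Finset (Fin n)) (hv : v ∈ V.image (trm i ω)) :
    δ / 2 * (((V.filter fun S => trm i ω S = v).card : ℝ) - 1)
      ≤ ∑ x : X, P x * (min (nu V (Function.update ω i x) v)
          (nu V (Function.update ω i x) (insert i v)) : ℝ) := by
  obtain ⟨S₀, hS₀V, hS₀⟩ := Finset.mem_image.1 hv
  have hiv : i ∉ v := by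
    rw [← hS₀]
    intro h
    exact absurd (Finset.mem_of_mem_filter i h) (by simp)
  set C := V.filter fun S => trm i ω S = v with hC
  have hCV : C ⊆ V := Finset.filter_subset _ _
  have hk : 1 ≤ C.card := by
    rw [Nat.one_le_iff_ne_zero, ← Nat.pos_iff_ne_zero, Finset.card_pos]
    exact ⟨S₀, Finset.mem_filter.2 ⟨hS₀V, hS₀⟩⟩
  set ν₀ : X → ℕ := fun x => (C.filter fun S => x ∉ S).card with hν₀
  set ν₁ : X → ℕ := fun x => (C.filter fun S => x ∈ S).card with hν₁
  have hmin : ∀ x, (min (nu V (Function.update ω i x) v)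
      (nu V (Function.update ω i x) (insert i v)) : ℕ) = min (ν₀ x) (ν₁ x) := by
    intro x
    rw [nu_update_base V i ω x v hiv, nu_update_insert V i ω x v hiv]
  have hsum01 : ∀ x, ν₁ x + ν₀ x = C.card := fun x =>
    Finset.card_filter_add_card_filter_not _
  have hprodmin : ∀ x, (ν₀ x : ℝ) * ν₁ x ≤ (C.card : ℝ) * min (ν₀ x) (ν₁ x) := by
    intro x
    have : ν₀ x * ν₁ x ≤ C.card * min (ν₀ x) (ν₁ x) := by
      rcases le_total (ν₀ x) (ν₁ x) with h | h
      · rw [min_eq_left h]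
        calc ν₀ x * ν₁ x ≤ C.card * ν₀ x := by
              have := hsum01 x; nlinarith
          _ = _ := by ring
      · rw [min_eq_right h]
        calc ν₀ x * ν₁ x ≤ C.card * ν₁ x := by
              have := hsum01 x; nlinarith
          _ = _ := by ring
    exact_mod_cast this
  -- counting separated ordered pairs
  have hsep_count : ∀ x, ∑ S ∈ C, ∑ T ∈ C, (if x ∈ symmDiff S T then (1:ℝ) else 0)
      = 2 * (ν₀ x * ν₁ x) := by
    intro x
    have hinner : ∀ S ∈ C, ∑ T ∈ C, (if x ∈ symmDiff S T then (1:ℝ) else 0)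
        = if x ∈ S then (ν₀ x : ℝ) else (ν₁ x : ℝ) := by
      intro S _
      by_cases hxS : x ∈ S
      · rw [if_pos hxS, Finset.sum_boole]
        have : (C.filter fun T => x ∈ symmDiff S T) = (C.filter fun T => x ∉ T) := by
          apply Finset.filter_congr
          intro T _
          simp [Finset.mem_symmDiff, hxS]
        rw [this, hν₀]
      · rw [if_neg hxS, Finset.sum_boole]
        have : (C.filter fun T => x ∈ symmDiff S T) = (C.filter fun T => x ∈ T) := by
          apply Finset.filter_congr
          intro T _
          simp [Finset.mem_symmDiff, hxS]
        rw [this, hν₁]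
    rw [Finset.sum_congr rfl hinner, Finset.sum_ite, Finset.sum_const, Finset.sum_const]
    simp only [nsmul_eq_mul]
    have : (C.filter fun S => ¬ x ∈ S).card = ν₀ x := rfl
    rw [this]
    have : (C.filter fun S => x ∈ S).card = ν₁ x := rfl
    rw [this]
    ring
  have hmeas_eq : ∀ A : Finset X, ∑ x : X, P x * (if x ∈ A then (1:ℝ) else 0) = meas P A := by
    intro A
    rw [meas]
    rw [← Finset.sum_filter_add_sum_filter_not Finset.univ (fun x => x ∈ A)]
    have h1 : ∑ x ∈ Finset.univ.filter (fun x => x ∈ A), P x * (if x ∈ A then (1:ℝ) else 0)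
        = ∑ x ∈ Finset.univ.filter (fun x => x ∈ A), P x := by
      apply Finset.sum_congr rfl
      intro x hx
      rw [if_pos (Finset.mem_filter.1 hx).2, mul_one]
    have h2 : ∑ x ∈ Finset.univ.filter (fun x => ¬ x ∈ A), P x * (if x ∈ A then (1:ℝ) else 0)
        = 0 := by
      apply Finset.sum_eq_zero
      intro x hx
      rw [if_neg (Finset.mem_filter.1 hx).2, mul_zero]
    rw [h1, h2, add_zero]
    congr 1
    ext x
    simp
  have hchain : δ * ((C.card : ℝ) * ((C.card : ℝ) - 1))
      ≤ 2 * (C.card : ℝ) * ∑ x : X, P x * (min (ν₀ x) (ν₁ x) : ℝ) := by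
    have step1 : δ * ((C.card : ℝ) * ((C.card : ℝ) - 1))
        ≤ ∑ S ∈ C, ∑ T ∈ C, meas P (symmDiff S T) := by
      have hdiag : ∀ S ∈ C, ∑ T ∈ C, meas P (symmDiff S T)
          = ∑ T ∈ C.erase S, meas P (symmDiff S T) := by
        intro S hS
        rw [← Finset.add_sum_erase C _ hS]
        simp [meas]
      rw [Finset.sum_congr rfl hdiag]
      have : ∀ S ∈ C, δ * ((C.card : ℝ) - 1) ≤ ∑ T ∈ C.erase S, meas P (symmDiff S T) := by
        intro S hS
        have hle : ∀ T ∈ C.erase S, δ ≤ meas P (symmDiff S T) := by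
          intro T hT
          exact hsep S (hCV hS) T (hCV (Finset.mem_of_mem_erase hT))
            (fun h => Finset.ne_of_mem_erase hT h.symm)
        calc δ * ((C.card : ℝ) - 1) = (C.erase S).card * δ := by
              rw [Finset.card_erase_of_mem hS]
              have : ((C.card - 1 : ℕ) : ℝ) = (C.card : ℝ) - 1 := by
                have := hk; push_cast [Nat.cast_sub (by omega : 1 ≤ C.card)]; ring
              rw [this]; ring
          _ ≤ _ := by
              have h := Finset.card_nsmul_le_sum (C.erase S) _ δ hle
              rwa [nsmul_eq_mul] at h
      calc δ * ((C.card : ℝ) * ((C.card : ℝ) - 1))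
          = ∑ _S ∈ C, δ * ((C.card : ℝ) - 1) := by
            rw [Finset.sum_const, nsmul_eq_mul]; ring
        _ ≤ _ := Finset.sum_le_sum this
    have step2 : ∑ S ∈ C, ∑ T ∈ C, meas P (symmDiff S T)
        = ∑ x : X, P x * (2 * (ν₀ x * ν₁ x)) := by
      have : ∀ S ∈ C, ∀ T ∈ C, meas P (symmDiff S T)
          = ∑ x : X, P x * (if x ∈ symmDiff S T then (1:ℝ) else 0) :=
        fun S _ T _ => (hmeas_eq _).symm
      calc ∑ S ∈ C, ∑ T ∈ C, meas P (symmDiff S T)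
          = ∑ S ∈ C, ∑ T ∈ C, ∑ x : X, P x * (if x ∈ symmDiff S T then (1:ℝ) else 0) := by
            apply Finset.sum_congr rfl; intro S hS
            apply Finset.sum_congr rfl; intro T hT
            exact this S hS T hT
        _ = ∑ S ∈ C, ∑ x : X, ∑ T ∈ C, P x * (if x ∈ symmDiff S T then (1:ℝ) else 0) := by
            apply Finset.sum_congr rfl; intro S _
            exact Finset.sum_comm
        _ = ∑ x : X, ∑ S ∈ C, ∑ T ∈ C, P x * (if x ∈ symmDiff S T then (1:ℝ) else 0) :=
            Finset.sum_comm
        _ = ∑ x : X, P x * (2 * (ν₀ x * ν₁ x)) := by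
            apply Finset.sum_congr rfl; intro x _
            rw [← hsep_count x, Finset.mul_sum]
            apply Finset.sum_congr rfl; intro S _
            rw [Finset.mul_sum]
    have step3 : ∑ x : X, P x * (2 * (ν₀ x * ν₁ x))
        ≤ ∑ x : X, P x * (2 * ((C.card : ℝ) * min (ν₀ x) (ν₁ x))) := by
      apply Finset.sum_le_sum
      intro x _
      apply mul_le_mul_of_nonneg_left _ (hP0 x)
      have h := hprodmin x
      push_cast at h ⊢
      linarith
    calc δ * ((C.card : ℝ) * ((C.card : ℝ) - 1)) ≤ _ := step1
      _ = _ := step2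
      _ ≤ _ := step3
      _ = 2 * (C.card : ℝ) * ∑ x : X, P x * (min (ν₀ x) (ν₁ x) : ℝ) := by
          rw [Finset.mul_sum]
          apply Finset.sum_congr rfl; intro x _
          push_cast
          ring
  have hCpos : (0:ℝ) < 2 * (C.card : ℝ) := by
    have : (1:ℝ) ≤ (C.card : ℝ) := by exact_mod_cast hk
    linarith
  have result : δ / 2 * (((C.card) : ℝ) - 1) ≤ ∑ x : X, P x * (min (ν₀ x) (ν₁ x) : ℝ) := by
    apply le_of_mul_le_mul_left _ hCpos
    calc 2 * (C.card : ℝ) * (δ / 2 * ((C.card : ℝ) - 1))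
        = δ * ((C.card : ℝ) * ((C.card : ℝ) - 1)) := by ring
      _ ≤ _ := hchain
  calc δ / 2 * (((V.filter fun S => trm i ω S = v).card : ℝ) - 1)
      = δ / 2 * (((C.card) : ℝ) - 1) := by rw [hC]
    _ ≤ ∑ x : X, P x * (min (ν₀ x) (ν₁ x) : ℝ) := result
    _ = _ := by
        apply Finset.sum_congr rfl; intro x _
        rw [← Nat.cast_min, ← hmin x, Nat.cast_min]

lemma update_bound (P : X → ℝ) (hP0 : ∀ x, 0 ≤ P x) {n : ℕ} (V : Finset (Finset X)) (δ : ℝ)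
    (hδ0 : 0 ≤ δ)
    (hsep : ∀ S₁ ∈ V, ∀ S₂ ∈ V, S₁ ≠ S₂ → δ ≤ meas P (symmDiff S₁ S₂))
    (i : Fin n) (ω : Fin n → X) :
    δ / 2 * ((V.card : ℝ) - (fm V i ω : ℝ))
      ≤ ∑ x : X, P x * (wgt V i (Function.update ω i x) : ℝ) := by
  set I := V.image (trm i ω) with hI
  have hIpow : I ⊆ ((Finset.univ : Finset (Fin n)).erase i).powerset := by
    intro v hv
    obtain ⟨S, _, rfl⟩ := Finset.mem_image.1 hv
    exact Finset.mem_powerset.2 (Finset.filter_subset _ _)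
  have hwgtN : ∀ x, wgt V i (Function.update ω i x)
      = ∑ v ∈ I, min (nu V (Function.update ω i x) v)
          (nu V (Function.update ω i x) (insert i v)) := by
    intro x
    rw [wgt]
    rw [← Finset.sum_subset hIpow]
    intro u hu hunotI
    have : nu V (Function.update ω i x) u = 0 := by
      rw [nu, Finset.card_eq_zero]
      rw [Finset.filter_eq_empty_iff]
      intro S hSV h
      apply hunotI
      have hiu : i ∉ u := fun hh =>
        absurd (Finset.mem_powerset.1 hu hh) (by simp)
      have : trm i ω S = u := by
        rw [← trm_update i ω x S, trm_eq_erase_tr, h, Finset.erase_eq_of_notMem hiu]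
      exact this ▸ Finset.mem_image_of_mem _ hSV
    simp [this]
  have hfib : ∑ v ∈ I, ((V.filter fun S => trm i ω S = v).card : ℝ) = (V.card : ℝ) := by
    have h := Finset.card_eq_sum_card_fiberwise
      (fun S hS => Finset.mem_image_of_mem (trm i ω) hS : ∀ S ∈ V, trm i ω S ∈ I)
    rw [h]
    push_cast
    rfl
  have hkey : ∑ v ∈ I, (δ / 2 * (((V.filter fun S => trm i ω S = v).card : ℝ) - 1))
      = δ / 2 * ((V.card : ℝ) - (fm V i ω : ℝ)) := by
    rw [← Finset.mul_sum, Finset.sum_sub_distrib, hfib, Finset.sum_const, nsmul_eq_mul, mul_one]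
    rw [fm, ← hI]
  calc δ / 2 * ((V.card : ℝ) - (fm V i ω : ℝ))
      = ∑ v ∈ I, (δ / 2 * (((V.filter fun S => trm i ω S = v).card : ℝ) - 1)) := hkey.symm
    _ ≤ ∑ v ∈ I, ∑ x : X, P x * (min (nu V (Function.update ω i x) v)
          (nu V (Function.update ω i x) (insert i v)) : ℝ) := by
        apply Finset.sum_le_sum
        intro v hv
        exact class_bound P hP0 V δ hδ0 hsep i ω v hv
    _ = ∑ x : X, ∑ v ∈ I, P x * (min (nu V (Function.update ω i x) v)
          (nu V (Function.update ω i x) (insert i v)) : ℝ) := Finset.sum_comm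
    _ = ∑ x : X, P x * (wgt V i (Function.update ω i x) : ℝ) := by
        apply Finset.sum_congr rfl
        intro x _
        rw [hwgtN x, ← Finset.mul_sum]
        congr 1
        push_cast
        rfl

lemma weight_total (P : X → ℝ) (hP1 : ∑ x : X, P x = 1) (n : ℕ) :
    ∑ ω : Fin n → X, ∏ j, P (ω j) = 1 := by
  rw [← Fintype.prod_sum]
  simp [hP1]

lemma change_var (P : X → ℝ) (hP1 : ∑ x : X, P x = 1) {n : ℕ} (i : Fin n)
    (g : (Fin n → X) → ℝ) :
    ∑ ω : Fin n → X, (∏ j, P (ω j)) * (∑ x : X, P x * g (Function.update ω i x))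
      = ∑ ω : Fin n → X, (∏ j, P (ω j)) * g ω := by
  have prodid : ∀ (ω : Fin n → X) (x : X),
      (∏ j, P (Function.update ω i x j)) * P (ω i) = (∏ j, P (ω j)) * P x := by
    intro ω x
    have h2 : ∏ j, P (Function.update ω i x j)
        = P x * ∏ j ∈ Finset.univ.erase i, P (ω j) := by
      rw [← Finset.mul_prod_erase Finset.univ (fun j => P (Function.update ω i x j))
        (Finset.mem_univ i)]
      congr 1
      · rw [Function.update_self]
      · apply Finset.prod_congr rfl
        intro j hj
        rw [Function.update_of_ne (Finset.ne_of_mem_erase hj)]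
    have h3 : ∏ j, P (ω j) = P (ω i) * ∏ j ∈ Finset.univ.erase i, P (ω j) :=
      (Finset.mul_prod_erase Finset.univ _ (Finset.mem_univ i)).symm
    rw [h2, h3]
    ring
  have key : ∑ p : (Fin n → X) × X, (∏ j, P (p.1 j)) * P p.2 * g (Function.update p.1 i p.2)
      = ∑ p : (Fin n → X) × X, (∏ j, P (p.1 j)) * P p.2 * g p.1 := by
    apply Fintype.sum_bijective
      (fun p : (Fin n → X) × X => (Function.update p.1 i p.2, p.1 i)) ?_ _ _ ?_
    · apply Function.Involutive.bijective
      intro p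
      have h1 : Function.update (Function.update p.1 i p.2) i (p.1 i) = p.1 := by
        rw [Function.update_idem, Function.update_eq_self]
      have h2 : Function.update p.1 i p.2 i = p.2 := Function.update_self _ _ _
      simp only
      exact Prod.ext h1 h2
    · intro p
      simp only
      rw [prodid p.1 p.2]
  calc ∑ ω : Fin n → X, (∏ j, P (ω j)) * (∑ x : X, P x * g (Function.update ω i x))
      = ∑ p : (Fin n → X) × X, (∏ j, P (p.1 j)) * P p.2 * g (Function.update p.1 i p.2) := by
        rw [Fintype.sum_prod_type]
        apply Finset.sum_congr rfl; intro ω _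
        rw [Finset.mul_sum]
        apply Finset.sum_congr rfl; intro x _
        ring
    _ = ∑ p : (Fin n → X) × X, (∏ j, P (p.1 j)) * P p.2 * g p.1 := key
    _ = ∑ ω : Fin n → X, (∏ j, P (ω j)) * g ω := by
        rw [Fintype.sum_prod_type]
        apply Finset.sum_congr rfl; intro ω _
        have : ∀ x : X, (∏ j, P (ω j)) * P x * g ω = ((∏ j, P (ω j)) * g ω) * P x := by
          intro x; ring
        rw [Finset.sum_congr rfl (fun x _ => this x), ← Finset.mul_sum, hP1, mul_one]

lemma sum_choose_le {d n : ℕ} (hd : 1 ≤ d) (hdn : d ≤ n) :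
    ((∑ k ∈ Finset.range (d + 1), n.choose k : ℕ) : ℝ)
      ≤ (Real.exp 1 * n / d) ^ d := by
  have hn : 0 < n := lt_of_lt_of_le hd hdn
  have hn0 : (0:ℝ) < n := by exact_mod_cast hn
  have hd0 : (0:ℝ) < d := by exact_mod_cast hd
  set x : ℝ := (d : ℝ) / n with hx
  have hx0 : 0 < x := by positivity
  have hx1 : x ≤ 1 := by
    rw [hx, div_le_one hn0]
    exact_mod_cast hdn
  have h1 : ((∑ k ∈ Finset.range (d + 1), n.choose k : ℕ) : ℝ) * x ^ d
      ≤ ∑ k ∈ Finset.range (d + 1), (n.choose k : ℝ) * x ^ k := by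
    push_cast
    rw [Finset.sum_mul]
    apply Finset.sum_le_sum
    intro k hk
    have hkd : k ≤ d := by
      have := Finset.mem_range.1 hk; omega
    apply mul_le_mul_of_nonneg_left _ (by positivity)
    exact pow_le_pow_of_le_one hx0.le hx1 hkd
  have h2 : ∑ k ∈ Finset.range (d + 1), (n.choose k : ℝ) * x ^ k
      ≤ ∑ k ∈ Finset.range (n + 1), (n.choose k : ℝ) * x ^ k := by
    apply Finset.sum_le_sum_of_subset_of_nonneg
    · exact Finset.range_subset_range.2 (by omega)
    · intro k _ _
      positivity
  have h3 : ∑ k ∈ Finset.range (n + 1), (n.choose k : ℝ) * x ^ k = (x + 1) ^ n := by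
    rw [add_pow]
    apply Finset.sum_congr rfl
    intro k _
    rw [one_pow]
    ring
  have h4 : (x + 1) ^ n ≤ Real.exp 1 ^ d := by
    calc (x + 1) ^ n ≤ Real.exp x ^ n := by
          apply pow_le_pow_left₀ (by positivity)
          exact Real.add_one_le_exp x
      _ = Real.exp ((n : ℝ) * x) := (Real.exp_nat_mul x n).symm
      _ = Real.exp d := by
          congr 1
          rw [hx]
          field_simp
      _ = Real.exp 1 ^ d := by rw [Real.exp_one_pow]
  have hfinal : ((∑ k ∈ Finset.range (d + 1), n.choose k : ℕ) : ℝ) * x ^ d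
      ≤ Real.exp 1 ^ d := le_trans h1 (le_trans h2 (h3 ▸ h4))
  have hxd : (0:ℝ) < x ^ d := by positivity
  rw [show Real.exp 1 * n / d = Real.exp 1 / x by rw [hx]; field_simp]
  rw [div_pow, le_div_iff₀ hxd]
  exact hfinal

set_option maxHeartbeats 1000000 in
theorem packing (P : X → ℝ) (hP0 : ∀ x, 0 ≤ P x) (hP1 : ∑ x : X, P x = 1)
    (V : Finset (Finset X)) (d : ℕ)
    (hVC : ∀ Y : Finset X, (∀ Z ⊆ Y, ∃ S ∈ V, S ∩ Y = Z) → Y.card ≤ d)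
    (δ : ℝ) (hδ0 : 0 < δ) (hδ1 : δ ≤ 1)
    (hsep : ∀ S₁ ∈ V, ∀ S₂ ∈ V, S₁ ≠ S₂ → δ ≤ meas P (symmDiff S₁ S₂)) :
    (V.card : ℝ) ≤ (30 / δ) ^ d := by
  have h30 : (1:ℝ) ≤ 30 / δ := by
    rw [le_div_iff₀ hδ0]; linarith
  by_cases hV1 : V.card ≤ 1
  · calc (V.card : ℝ) ≤ 1 := by exact_mod_cast hV1
      _ = (1:ℝ) ^ d := (one_pow d).symm
      _ ≤ (30 / δ) ^ d := pow_le_pow_left₀ zero_le_one h30 d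
  push_neg at hV1
  obtain ⟨S₁, hS₁, S₂, hS₂, hne⟩ := Finset.one_lt_card.1 hV1
  have hδS := hsep S₁ hS₁ S₂ hS₂ hne
  have hsd : (symmDiff S₁ S₂).Nonempty := by
    rw [Finset.nonempty_iff_ne_empty]
    intro h
    rw [meas, h, Finset.sum_empty] at hδS
    linarith
  obtain ⟨x₀, hx₀⟩ := hsd
  have hd1 : 1 ≤ d := by
    have h := hVC {x₀} ?_
    · simpa using h
    · intro Z hZ
      rw [Finset.mem_symmDiff] at hx₀
      rcases Finset.subset_singleton_iff.1 hZ with rfl | rfl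
      · rcases hx₀ with ⟨h1, h2⟩ | ⟨h1, h2⟩
        · exact ⟨S₂, hS₂, by rw [Finset.inter_singleton_of_notMem h2]⟩
        · exact ⟨S₁, hS₁, by rw [Finset.inter_singleton_of_notMem h2]⟩
      · rcases hx₀ with ⟨h1, h2⟩ | ⟨h1, h2⟩
        · exact ⟨S₁, hS₁, by rw [Finset.inter_singleton_of_mem h1]⟩
        · exact ⟨S₂, hS₂, by rw [Finset.inter_singleton_of_mem h1]⟩
  have hd0 : (0:ℝ) < d := by exact_mod_cast hd1
  set n := ⌈(4 * d : ℝ) / δ⌉₊ with hn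
  have hn_ge : (4 * d : ℝ) / δ ≤ n := Nat.le_ceil _
  have hdd : (1:ℝ) ≤ (d:ℝ) / δ := by
    rw [le_div_iff₀ hδ0]
    have : (1:ℝ) ≤ (d:ℝ) := by exact_mod_cast hd1
    linarith
  have hn_le : (n : ℝ) ≤ 5 * d / δ := by
    have h0 : (0:ℝ) ≤ 4 * d / δ := by positivity
    have h := Nat.ceil_lt_add_one h0
    have : (n : ℝ) < 4 * d / δ + 1 := h
    have h5 : 4 * (d:ℝ) / δ + (d:ℝ)/δ = 5 * d / δ := by ring
    linarith
  have hdn : d ≤ n := by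
    have h : (d : ℝ) ≤ (n : ℝ) := by
      have : (d:ℝ) ≤ 4 * d / δ := by
        rw [le_div_iff₀ hδ0]
        nlinarith
      linarith
    exact_mod_cast h
  set W : (Fin n → X) → ℝ := fun ω => ∏ j, P (ω j) with hW
  have hW0 : ∀ ω, 0 ≤ W ω := fun ω => Finset.prod_nonneg fun j _ => hP0 _
  have hWsum : ∑ ω : Fin n → X, W ω = 1 := weight_total P hP1 n
  set Ef : ℝ := ∑ ω : Fin n → X, W ω * (fc V ω : ℝ) with hEf
  have hEf0 : 0 ≤ Ef := Finset.sum_nonneg fun ω _ => mul_nonneg (hW0 ω) (by positivity)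
  have hupper : ∑ i : Fin n, ∑ ω : Fin n → X, W ω * (wgt V i ω : ℝ)
      ≤ (d : ℝ) * V.card := by
    rw [Finset.sum_comm]
    calc ∑ ω : Fin n → X, ∑ i : Fin n, W ω * (wgt V i ω : ℝ)
        = ∑ ω : Fin n → X, W ω * ((∑ i : Fin n, wgt V i ω : ℕ) : ℝ) := by
          apply Finset.sum_congr rfl; intro ω _
          rw [← Finset.mul_sum]
          push_cast
          rfl
      _ ≤ ∑ ω : Fin n → X, W ω * ((d : ℝ) * V.card) := by
          apply Finset.sum_le_sum
          intro ω _
          apply mul_le_mul_of_nonneg_left _ (hW0 ω)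
          have := sum_wgt_le V hVC ω
          exact_mod_cast this
      _ = (d : ℝ) * V.card := by rw [← Finset.sum_mul, hWsum, one_mul]
  have hlower : ∀ i : Fin n, δ / 2 * ((V.card : ℝ) - Ef)
      ≤ ∑ ω : Fin n → X, W ω * (wgt V i ω : ℝ) := by
    intro i
    rw [← change_var P hP1 i (fun ω => (wgt V i ω : ℝ))]
    have hfm_le : ∑ ω : Fin n → X, W ω * (fm V i ω : ℝ) ≤ Ef := by
      apply Finset.sum_le_sum
      intro ω _
      apply mul_le_mul_of_nonneg_left _ (hW0 ω)
      exact_mod_cast fm_le_fc V i ω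
    calc δ / 2 * ((V.card : ℝ) - Ef)
        ≤ ∑ ω : Fin n → X, W ω * (δ / 2 * ((V.card : ℝ) - (fm V i ω : ℝ))) := by
          have hexp : ∑ ω : Fin n → X, W ω * (δ / 2 * ((V.card : ℝ) - (fm V i ω : ℝ)))
              = δ / 2 * ((V.card : ℝ) - ∑ ω : Fin n → X, W ω * (fm V i ω : ℝ)) := by
            have hterm : ∀ ω : Fin n → X, W ω * (δ / 2 * ((V.card : ℝ) - (fm V i ω : ℝ)))
                = δ / 2 * (W ω * (V.card : ℝ) - W ω * (fm V i ω : ℝ)) := fun ω => by ring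
            rw [Finset.sum_congr rfl (fun ω _ => hterm ω), ← Finset.mul_sum,
              Finset.sum_sub_distrib, ← Finset.sum_mul, hWsum, one_mul]
          rw [hexp]
          apply mul_le_mul_of_nonneg_left _ (by positivity)
          linarith
      _ ≤ ∑ ω : Fin n → X, W ω * (∑ x : X, P x * (wgt V i (Function.update ω i x) : ℝ)) := by
          apply Finset.sum_le_sum
          intro ω _
          exact mul_le_mul_of_nonneg_left
            (update_bound P hP0 V δ hδ0.le hsep i ω) (hW0 ω)
      _ = _ := rfl
  have hcomb : (n : ℝ) * (δ / 2 * ((V.card : ℝ) - Ef)) ≤ (d : ℝ) * V.card := by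
    calc (n : ℝ) * (δ / 2 * ((V.card : ℝ) - Ef))
        = ∑ _i : Fin n, δ / 2 * ((V.card : ℝ) - Ef) := by
          rw [Finset.sum_const, Finset.card_univ, Fintype.card_fin, nsmul_eq_mul]
      _ ≤ ∑ i : Fin n, ∑ ω : Fin n → X, W ω * (wgt V i ω : ℝ) :=
          Finset.sum_le_sum fun i _ => hlower i
      _ ≤ _ := hupper
  have h4d : 4 * (d:ℝ) ≤ (n:ℝ) * δ := by
    rw [div_le_iff₀ hδ0] at hn_ge
    linarith
  have hVc2 : (V.card : ℝ) ≤ 2 * Ef := by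
    rcases le_or_gt ((V.card : ℝ) - Ef) 0 with h | h
    · linarith
    · have h' : 4 * (d:ℝ) * ((V.card : ℝ) - Ef) ≤ ((n:ℝ) * δ) * ((V.card : ℝ) - Ef) :=
        mul_le_mul_of_nonneg_right h4d h.le
      have h2 : 2 * (d:ℝ) * ((V.card : ℝ) - Ef) ≤ (n : ℝ) * (δ / 2 * ((V.card : ℝ) - Ef)) := by
        nlinarith
      have h3 : 2 * (d:ℝ) * ((V.card : ℝ) - Ef) ≤ (d : ℝ) * V.card := h2.trans hcomb
      by_contra hc
      push_neg at hc
      have : 0 < (d:ℝ) * ((V.card : ℝ) - 2 * Ef) := mul_pos hd0 (by linarith)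
      nlinarith
  have hsauer : Ef ≤ ((∑ k ∈ Finset.range (d + 1), n.choose k : ℕ) : ℝ) := by
    calc Ef ≤ ∑ ω : Fin n → X, W ω * ((∑ k ∈ Finset.range (d + 1), n.choose k : ℕ) : ℝ) := by
          apply Finset.sum_le_sum
          intro ω _
          apply mul_le_mul_of_nonneg_left _ (hW0 ω)
          exact_mod_cast sauer V hVC ω
      _ = _ := by rw [← Finset.sum_mul, hWsum, one_mul]
  have hΦ := sum_choose_le hd1 hdn
  have hstep : Real.exp 1 * n / d ≤ 5 * Real.exp 1 / δ := by
    rw [div_le_div_iff₀ hd0 hδ0]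
    have hnd : (n:ℝ) * δ ≤ 5 * d := by
      have := (le_div_iff₀ hδ0).1 hn_le
      linarith
    nlinarith [Real.exp_pos 1]
  have hpow : (Real.exp 1 * n / d) ^ d ≤ (5 * Real.exp 1 / δ) ^ d :=
    pow_le_pow_left₀ (by positivity) hstep d
  have h2d : (2:ℝ) ≤ 2 ^ d := le_self_pow₀ one_le_two (by omega)
  have hee : Real.exp 1 ≤ 3 := by
    have := Real.exp_one_lt_d9
    linarith
  calc (V.card : ℝ) ≤ 2 * Ef := hVc2
    _ ≤ 2 * ((∑ k ∈ Finset.range (d + 1), n.choose k : ℕ) : ℝ) := by linarith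
    _ ≤ 2 * (Real.exp 1 * n / d) ^ d := by linarith
    _ ≤ 2 * (5 * Real.exp 1 / δ) ^ d := by linarith
    _ ≤ 2 ^ d * (5 * Real.exp 1 / δ) ^ d :=
        mul_le_mul_of_nonneg_right h2d (by positivity)
    _ = (2 * (5 * Real.exp 1 / δ)) ^ d := (mul_pow _ _ _).symm
    _ ≤ (30 / δ) ^ d := by
        apply pow_le_pow_left₀ (by positivity)
        have heq : 2 * (5 * Real.exp 1 / δ) = 10 * Real.exp 1 / δ := by ring
        rw [heq, div_le_div_iff₀ hδ0 hδ0]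
        nlinarith

end HPack



lemma meas_nonneg {X : Type*} (P : X → ℝ) (h : ∀ x, 0 ≤ P x) (S : Finset X) :
    0 ≤ meas P S := Finset.sum_nonneg fun x _ => h x

lemma meas_mono {X : Type*} (P : X → ℝ) (h : ∀ x, 0 ≤ P x) {S T : Finset X} (hST : S ⊆ T) :
    meas P S ≤ meas P T :=
  Finset.sum_le_sum_of_subset_of_nonneg hST fun x _ _ => h x

lemma meas_le_one {X : Type*} [Fintype X] (P : X → ℝ) (h : ∀ x, 0 ≤ P x)
    (h1 : ∑ x, P x = 1) (S : Finset X) : meas P S ≤ 1 := by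
  calc meas P S ≤ meas P Finset.univ := meas_mono P h (Finset.subset_univ S)
    _ = 1 := h1

theorem doubling_le_capacity_pow : ∃ c : ℝ, 0 < c ∧
    ∀ (X : Type) [Fintype X], ∀ P : X → ℝ, (∀ x, 0 ≤ P x) → (∑ x, P x) = 1 →
    ∀ (R : Finset (Finset X)) (d : ℕ),
      (∀ Y : Finset X, (∀ Z ⊆ Y, ∃ S ∈ R, S ∩ Y = Z) → Y.card ≤ d) →
      ∀ ε : ℝ, ε ∈ Set.Ioc (0 : ℝ) 1 →
      ∀ ε₀ : ℝ, ε ≤ ε₀ → ∀ Q : Finset (Finset X), Q ⊆ R →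
        (∀ S ∈ Q, meas P S ≤ 2 * ε₀) →
        (∀ S₁ ∈ Q, ∀ S₂ ∈ Q, S₁ ≠ S₂ → ε₀ ≤ meas P (symmDiff S₁ S₂)) →
        (Q.card : ℝ) ≤ (c * max 1 (alexCap P R ε)) ^ d := by
  refine ⟨60, by norm_num, ?_⟩
  intro X _ P hP0 hP1 R d hVC ε hε ε₀ hε₀ Q hQR hQm hQsep
  set M := max 1 (alexCap P R ε) with hM
  have hM1 : (1:ℝ) ≤ M := le_max_left _ _
  have hRHS1 : (1:ℝ) ≤ (60 * M) ^ d := by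
    calc (1:ℝ) = 1 ^ d := (one_pow d).symm
      _ ≤ (60 * M) ^ d := pow_le_pow_left₀ zero_le_one (by linarith) d
  by_cases hQ1 : Q.card ≤ 1
  · calc (Q.card : ℝ) ≤ 1 := by exact_mod_cast hQ1
      _ ≤ _ := hRHS1
  push_neg at hQ1
  obtain ⟨T₁, hT₁, T₂, hT₂, hTne⟩ := Finset.one_lt_card.1 hQ1
  have hεpos : (0:ℝ) < ε := hε.1
  have hε₀pos : 0 < ε₀ := lt_of_lt_of_le hεpos hε₀
  set U := Q.biUnion id with hU
  have hSU : ∀ S ∈ Q, S ⊆ U := fun S hS => Finset.subset_biUnion_of_mem id hS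
  set μ := meas P U with hμ
  have hsdsub : ∀ S₁ ∈ Q, ∀ S₂ ∈ Q, symmDiff S₁ S₂ ⊆ U := by
    intro S₁ h₁ S₂ h₂ x hx
    rw [Finset.mem_symmDiff] at hx
    rcases hx with ⟨h, _⟩ | ⟨h, _⟩
    · exact hSU S₁ h₁ h
    · exact hSU S₂ h₂ h
  have hμ_ge : ε₀ ≤ μ :=
    le_trans (hQsep T₁ hT₁ T₂ hT₂ hTne) (meas_mono P hP0 (hsdsub T₁ hT₁ T₂ hT₂))
  have hμpos : 0 < μ := lt_of_lt_of_le hε₀pos hμ_ge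
  set P' : X → ℝ := fun x => if x ∈ U then P x / μ else 0 with hP'
  have hP'0 : ∀ x, 0 ≤ P' x := by
    intro x
    rw [hP']
    dsimp only
    split
    · exact div_nonneg (hP0 x) hμpos.le
    · exact le_refl 0
  have hP'U : ∀ A : Finset X, A ⊆ U → meas P' A = meas P A / μ := by
    intro A hA
    rw [meas, meas, Finset.sum_div]
    apply Finset.sum_congr rfl
    intro x hx
    rw [hP']
    dsimp only
    rw [if_pos (hA hx)]
  have hP'1 : ∑ x, P' x = 1 := by
    have hsplit : ∑ x, P' x = ∑ x ∈ Finset.univ.filter (fun x => x ∈ U), P' x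
        + ∑ x ∈ Finset.univ.filter (fun x => ¬ x ∈ U), P' x :=
      (Finset.sum_filter_add_sum_filter_not _ _ _).symm
    have hzero : ∑ x ∈ Finset.univ.filter (fun x => ¬ x ∈ U), P' x = 0 := by
      apply Finset.sum_eq_zero
      intro x hx
      rw [hP']
      dsimp only
      rw [if_neg (Finset.mem_filter.1 hx).2]
    have hfil : Finset.univ.filter (fun x => x ∈ U) = U := by
      ext x; simp
    rw [hsplit, hzero, add_zero, hfil]
    have : ∑ x ∈ U, P' x = meas P' U := rfl
    rw [this, hP'U U (Finset.Subset.refl U), ← hμ, div_self hμpos.ne']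
  have hsep' : ∀ S₁ ∈ Q, ∀ S₂ ∈ Q, S₁ ≠ S₂ → ε₀ / μ ≤ meas P' (symmDiff S₁ S₂) := by
    intro S₁ h₁ S₂ h₂ hne
    rw [hP'U _ (hsdsub S₁ h₁ S₂ h₂)]
    exact (div_le_div_iff_of_pos_right hμpos).2 (hQsep S₁ h₁ S₂ h₂ hne)
  have hδ0 : 0 < ε₀ / μ := div_pos hε₀pos hμpos
  have hδ1 : ε₀ / μ ≤ 1 := (div_le_one hμpos).2 hμ_ge
  have hVCQ : ∀ Y : Finset X, (∀ Z ⊆ Y, ∃ S ∈ Q, S ∩ Y = Z) → Y.card ≤ d := by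
    intro Y hY
    apply hVC
    intro Z hZ
    obtain ⟨S, hS, h⟩ := hY Z hZ
    exact ⟨S, hQR hS, h⟩
  have hpack := HPack.packing P' hP'0 hP'1 Q d hVCQ (ε₀ / μ) hδ0 hδ1 hsep'
  -- capacity bound
  have hbdd : BddAbove {t : ℝ | ∃ ε₁ : ℝ, ε ≤ ε₁ ∧
      t = meas P ((R.filter fun S => meas P S ≤ ε₁).biUnion id) / ε₁} := by
    refine ⟨1 / ε, ?_⟩
    rintro t ⟨ε₁, hε₁, rfl⟩
    have hε₁pos : 0 < ε₁ := lt_of_lt_of_le hεpos hε₁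
    have hm1 : meas P ((R.filter fun S => meas P S ≤ ε₁).biUnion id) ≤ 1 :=
      meas_le_one P hP0 hP1 _
    calc meas P ((R.filter fun S => meas P S ≤ ε₁).biUnion id) / ε₁
        ≤ 1 / ε₁ := (div_le_div_iff_of_pos_right hε₁pos).2 hm1
      _ ≤ 1 / ε := one_div_le_one_div_of_le hεpos hε₁
  have hmem : meas P ((R.filter fun S => meas P S ≤ 2 * ε₀).biUnion id) / (2 * ε₀)
      ∈ {t : ℝ | ∃ ε₁ : ℝ, ε ≤ ε₁ ∧
      t = meas P ((R.filter fun S => meas P S ≤ ε₁).biUnion id) / ε₁} :=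
    ⟨2 * ε₀, by linarith, rfl⟩
  have hUsub : U ⊆ (R.filter fun S => meas P S ≤ 2 * ε₀).biUnion id := by
    intro x hx
    rw [hU, Finset.mem_biUnion] at hx
    obtain ⟨S, hSQ, hxS⟩ := hx
    rw [Finset.mem_biUnion]
    exact ⟨S, Finset.mem_filter.2 ⟨hQR hSQ, hQm S hSQ⟩, hxS⟩
  have hcap : μ / (2 * ε₀) ≤ alexCap P R ε := by
    have h1 : meas P ((R.filter fun S => meas P S ≤ 2 * ε₀).biUnion id) / (2 * ε₀)
        ≤ alexCap P R ε := le_csSup hbdd hmem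
    have h2 : μ / (2 * ε₀) ≤ meas P ((R.filter fun S => meas P S ≤ 2 * ε₀).biUnion id)
        / (2 * ε₀) :=
      (div_le_div_iff_of_pos_right (by linarith : (0:ℝ) < 2 * ε₀)).2 (meas_mono P hP0 hUsub)
    linarith
  have hμle : μ ≤ 2 * ε₀ * M := by
    have h1 : μ / (2 * ε₀) ≤ M := le_trans hcap (le_max_right 1 _)
    rw [div_le_iff₀ (by linarith : (0:ℝ) < 2 * ε₀)] at h1
    linarith
  calc (Q.card : ℝ) ≤ (30 / (ε₀ / μ)) ^ d := hpack
    _ ≤ (60 * M) ^ d := by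
        apply pow_le_pow_left₀ (by positivity)
        have heq : 30 / (ε₀ / μ) = 30 * μ / ε₀ := by
          field_simp
        rw [heq, div_le_iff₀ hε₀pos]
        nlinarith
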